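/- Let G be the setwise stabilizer of F5 in GL(6,3) (under the row action on lines W ↦ {v·g : v ∈ W}), i.e., G = {g ∈ GL(6,3) : g permutes the five lines of F5 among themselves}. Then G has order 240, the kernel of the induced permutation action of G on the five lines of F5 consists exactly of the two scalar matrices {1, −1}, and the image of this permutation action is the full symmetric group on the five lines of F5 (of order 120); in particular the projective setwise stabilizer of F5 is isomorphic to S₅. -/

import Mathlib

open Matrix

abbrev F3 := ZMod 3
abbrev V6 := Fin 6 → F3

/-- The line (2-dim subspace) represented by a 2×6 matrix: the span of its rows. -/
def lineOf (A : Matrix (Fin 2) (Fin 6) F3) : Submodule F3 V6 :=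
  Submodule.span F3 (Set.range A)

/-- The perp of a subspace `W` with respect to a 6×6 Gram matrix `M`:
`{x | xᵀ M w = 0 for all w ∈ W}`. -/
def perp (M : Matrix (Fin 6) (Fin 6) F3) (W : Submodule F3 V6) : Submodule F3 V6 where
  carrier := {x | ∀ w ∈ W, x ⬝ᵥ M.mulVec w = 0}
  add_mem' := by
    intro a b ha hb w hw
    simp only [Set.mem_setOf_eq] at *
    rw [add_dotProduct, ha w hw, hb w hw, add_zero]
  zero_mem' := by
    intro w hw
    exact zero_dotProduct _
  smul_mem' := by
    intro c x hx w hw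
    simp only [Set.mem_setOf_eq] at *
    rw [smul_dotProduct, hx w hw, smul_zero]

/-- A 2×6 matrix built from three 2×2 blocks. -/
def blk3 (A B C : Matrix (Fin 2) (Fin 2) F3) : Matrix (Fin 2) (Fin 6) F3 :=
  Matrix.of fun i j => ![A, B, C] ⟨(j : ℕ) / 2, by omega⟩ i ⟨(j : ℕ) % 2, by omega⟩

/-- A 6×6 matrix built from nine 2×2 blocks. -/
def blk33 (M : Matrix (Fin 3) (Fin 3) (Matrix (Fin 2) (Fin 2) F3)) :
    Matrix (Fin 6) (Fin 6) F3 :=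
  Matrix.of fun i j =>
    M ⟨(i : ℕ) / 2, by omega⟩ ⟨(j : ℕ) / 2, by omega⟩ ⟨(i : ℕ) % 2, by omega⟩ ⟨(j : ℕ) % 2, by omega⟩

/-- The 2×2 block of a 6×6 matrix in block-position `(i, j)`. -/
def blkAt (M : Matrix (Fin 6) (Fin 6) F3) (i j : Fin 3) : Matrix (Fin 2) (Fin 2) F3 :=
  Matrix.of fun a b => M ⟨2 * (i : ℕ) + (a : ℕ), by omega⟩ ⟨2 * (j : ℕ) + (b : ℕ), by omega⟩

/-- Two (not necessarily distinct) lines are opposite w.r.t. `M` if `ℓ ∩ m^⊥ = 0`. -/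
def Opp (M : Matrix (Fin 6) (Fin 6) F3) (ℓ m : Submodule F3 V6) : Prop :=
  ℓ ⊓ perp M m = ⊥

/-- The set `F5` of five lines: `F4` together with the line of `(I R S)` where
`R = [[2,0],[2,2]]` and `S = [[2,2],[0,2]]`. -/
def F5 : Set (Submodule F3 V6) :=
  {lineOf (blk3 1 0 0), lineOf (blk3 0 1 0), lineOf (blk3 0 0 1), lineOf (blk3 1 1 1),
   lineOf (blk3 1 !![2, 0; 2, 2] !![2, 2; 0, 2])}


/-! ### Auxiliary development -/

section Aux

@[simp] lemma cons_val_five' {α : Type*} {m : ℕ} (x : α) (u : Fin (m+5) → α) :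
    Matrix.vecCons x u 5 = Matrix.vecHead (Matrix.vecTail (Matrix.vecTail
      (Matrix.vecTail (Matrix.vecTail u)))) := rfl

def m0 : Matrix (Fin 2) (Fin 6) F3 := !![1,0,0,0,0,0; 0,1,0,0,0,0]
def m1 : Matrix (Fin 2) (Fin 6) F3 := !![0,0,1,0,0,0; 0,0,0,1,0,0]
def m2 : Matrix (Fin 2) (Fin 6) F3 := !![0,0,0,0,1,0; 0,0,0,0,0,1]
def m3 : Matrix (Fin 2) (Fin 6) F3 := !![1,0,1,0,1,0; 0,1,0,1,0,1]
def m4 : Matrix (Fin 2) (Fin 6) F3 := !![1,0,2,0,2,2; 0,1,2,2,0,2]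

lemma lineOf_eq_range (A : Matrix (Fin 2) (Fin 6) F3) :
    lineOf A = LinearMap.range A.vecMulLinear := by
  rw [lineOf, range_vecMulLinear]
  rfl

lemma mem_lineOf {A : Matrix (Fin 2) (Fin 6) F3} {x : V6} :
    x ∈ lineOf A ↔ ∃ c : Fin 2 → F3, c ᵥ* A = x := by
  rw [lineOf_eq_range]
  exact ⟨fun ⟨c, hc⟩ => ⟨c, hc⟩, fun ⟨c, hc⟩ => ⟨c, hc⟩⟩

def lineLE (A B : Matrix (Fin 2) (Fin 6) F3) : Prop :=
  ∀ i, ∃ c : Fin 2 → F3, c ᵥ* B = A i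

instance (A B : Matrix (Fin 2) (Fin 6) F3) : Decidable (lineLE A B) := by
  unfold lineLE; infer_instance

lemma lineOf_le_iff {A B : Matrix (Fin 2) (Fin 6) F3} :
    lineOf A ≤ lineOf B ↔ lineLE A B := by
  rw [lineOf, Submodule.span_le]
  constructor
  · intro h i
    exact mem_lineOf.mp (h (Set.mem_range_self i))
  · rintro h _ ⟨i, rfl⟩
    exact mem_lineOf.mpr (h i)

lemma lineOf_eq_iff {A B : Matrix (Fin 2) (Fin 6) F3} :
    lineOf A = lineOf B ↔ (lineLE A B ∧ lineLE B A) := by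
  rw [le_antisymm_iff, lineOf_le_iff, lineOf_le_iff]

lemma lineOf_ne {A B : Matrix (Fin 2) (Fin 6) F3} (h : ¬ (lineLE A B ∧ lineLE B A)) :
    lineOf A ≠ lineOf B := fun e => h (lineOf_eq_iff.mp e)

lemma map_lineOf (A : Matrix (Fin 2) (Fin 6) F3) (g : Matrix (Fin 6) (Fin 6) F3) :
    (lineOf A).map g.vecMulLinear = lineOf (A * g) := by
  rw [lineOf, lineOf, Submodule.map_span]
  exact congrArg _ (Set.range_comp _ _).symm

lemma F5_eq : F5 = {lineOf m0, lineOf m1, lineOf m2, lineOf m3, lineOf m4} := by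
  unfold F5
  rw [show blk3 1 0 0 = m0 from by decide, show blk3 0 1 0 = m1 from by decide,
    show blk3 0 0 1 = m2 from by decide, show blk3 1 1 1 = m3 from by decide,
    show blk3 1 !![2, 0; 2, 2] !![2, 2; 0, 2] = m4 from by decide]

lemma mem_F5_iff {ℓ : Submodule F3 V6} :
    ℓ ∈ F5 ↔ ℓ = lineOf m0 ∨ ℓ = lineOf m1 ∨ ℓ = lineOf m2 ∨ ℓ = lineOf m3 ∨ ℓ = lineOf m4 := by
  rw [F5_eq]
  simp [Set.mem_insert_iff, Set.mem_singleton_iff]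

/-! ### Kernel computation -/

def cat (u v w : Fin 2 → F3) : V6 := ![u 0, u 1, v 0, v 1, w 0, w 1]

lemma rowlemma3 : ∀ u v w : Fin 2 → F3,
    (∃ c : Fin 2 → F3, c ᵥ* m3 = cat u v w) → u = v ∧ v = w := by decide

def e40 (a b : Fin 2 → F3) : V6 := ![a 0, a 1, 2*a 0, 2*a 1, 2*a 0 + 2*b 0, 2*a 1 + 2*b 1]
def e41 (a b : Fin 2 → F3) : V6 := ![b 0, b 1, 2*a 0 + 2*b 0, 2*a 1 + 2*b 1, 2*b 0, 2*b 1]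

lemma rowlemma4 : ∀ a b : Fin 2 → F3, (∃ c : Fin 2 → F3, c ᵥ* m4 = e40 a b) →
    (∃ c : Fin 2 → F3, c ᵥ* m4 = e41 a b) → a 1 = 0 ∧ b 0 = 0 ∧ b 1 = a 0 := by decide

lemma fix_shape (g : Matrix (Fin 6) (Fin 6) F3)
    (h0 : lineLE (m0 * g) m0) (h1 : lineLE (m1 * g) m1) (h2 : lineLE (m2 * g) m2)
    (h3 : lineLE (m3 * g) m3) (h4 : lineLE (m4 * g) m4) :
    ∃ a : F3, g = a • 1 := by
  obtain ⟨c0, hc0⟩ := h0 0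
  obtain ⟨c1, hc1⟩ := h0 1
  obtain ⟨c2, hc2⟩ := h1 0
  obtain ⟨c3, hc3⟩ := h1 1
  obtain ⟨c4, hc4⟩ := h2 0
  obtain ⟨c5, hc5⟩ := h2 1
  have r0 : g 0 = ![c0 0, c0 1, 0,0,0,0] := by
    rw [show g 0 = (m0 * g) 0 by funext j; simp [m0, Matrix.mul_apply, Fin.sum_univ_six], ← hc0]
    funext j; fin_cases j <;> simp [m0, Matrix.vecMul, dotProduct, Fin.sum_univ_two]
  have r1 : g 1 = ![c1 0, c1 1, 0,0,0,0] := by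
    rw [show g 1 = (m0 * g) 1 by funext j; simp [m0, Matrix.mul_apply, Fin.sum_univ_six], ← hc1]
    funext j; fin_cases j <;> simp [m0, Matrix.vecMul, dotProduct, Fin.sum_univ_two]
  have r2 : g 2 = ![0,0,c2 0, c2 1, 0,0] := by
    rw [show g 2 = (m1 * g) 0 by funext j; simp [m1, Matrix.mul_apply, Fin.sum_univ_six], ← hc2]
    funext j; fin_cases j <;> simp [m1, Matrix.vecMul, dotProduct, Fin.sum_univ_two]
  have r3 : g 3 = ![0,0,c3 0, c3 1, 0,0] := by
    rw [show g 3 = (m1 * g) 1 by funext j; simp [m1, Matrix.mul_apply, Fin.sum_univ_six], ← hc3]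
    funext j; fin_cases j <;> simp [m1, Matrix.vecMul, dotProduct, Fin.sum_univ_two]
  have r4 : g 4 = ![0,0,0,0,c4 0, c4 1] := by
    rw [show g 4 = (m2 * g) 0 by funext j; simp [m2, Matrix.mul_apply, Fin.sum_univ_six], ← hc4]
    funext j; fin_cases j <;> simp [m2, Matrix.vecMul, dotProduct, Fin.sum_univ_two]
  have r5 : g 5 = ![0,0,0,0,c5 0, c5 1] := by
    rw [show g 5 = (m2 * g) 1 by funext j; simp [m2, Matrix.mul_apply, Fin.sum_univ_six], ← hc5]
    funext j; fin_cases j <;> simp [m2, Matrix.vecMul, dotProduct, Fin.sum_univ_two]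
  obtain ⟨d0, hd0⟩ := h3 0
  obtain ⟨d1, hd1⟩ := h3 1
  have s0 : (m3 * g) 0 = cat c0 c2 c4 := by
    funext j
    have : (m3 * g) 0 j = g 0 j + g 2 j + g 4 j := by
      simp [m3, Matrix.mul_apply, Fin.sum_univ_six]
    rw [this, r0, r2, r4]
    fin_cases j <;> simp [cat]
  have s1 : (m3 * g) 1 = cat c1 c3 c5 := by
    funext j
    have : (m3 * g) 1 j = g 1 j + g 3 j + g 5 j := by
      simp [m3, Matrix.mul_apply, Fin.sum_univ_six]
    rw [this, r1, r3, r5]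
    fin_cases j <;> simp [cat]
  obtain ⟨q02, q24⟩ := rowlemma3 c0 c2 c4 ⟨d0, hd0.trans s0⟩
  obtain ⟨q13, q35⟩ := rowlemma3 c1 c3 c5 ⟨d1, hd1.trans s1⟩
  subst q02 q24 q13 q35
  obtain ⟨f0, hf0⟩ := h4 0
  obtain ⟨f1, hf1⟩ := h4 1
  have t0 : (m4 * g) 0 = e40 c0 c1 := by
    funext j
    have : (m4 * g) 0 j = g 0 j + 2 * g 2 j + 2 * g 4 j + 2 * g 5 j := by
      simp [m4, Matrix.mul_apply, Fin.sum_univ_six]; try ring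
    rw [this, r0, r2, r4, r5]
    fin_cases j <;> (simp [e40]; try ring)
  have t1 : (m4 * g) 1 = e41 c0 c1 := by
    funext j
    have : (m4 * g) 1 j = g 1 j + 2 * g 2 j + 2 * g 3 j + 2 * g 5 j := by
      simp [m4, Matrix.mul_apply, Fin.sum_univ_six]; try ring
    rw [this, r1, r2, r3, r5]
    fin_cases j <;> (simp [e41]; try ring)
  obtain ⟨w1, w2, w3⟩ := rowlemma4 c0 c1 ⟨f0, hf0.trans t0⟩ ⟨f1, hf1.trans t1⟩
  refine ⟨c0 0, ?_⟩
  ext i j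
  fin_cases i
  · rw [show (⟨0, by norm_num⟩ : Fin 6) = 0 from rfl, r0]
    fin_cases j <;> simp [Matrix.one_apply, w1, w2, w3]
  · rw [show (⟨1, by norm_num⟩ : Fin 6) = 1 from rfl, r1]
    fin_cases j <;> simp [Matrix.one_apply, w1, w2, w3]
  · rw [show (⟨2, by norm_num⟩ : Fin 6) = 2 from rfl, r2]
    fin_cases j <;> simp [Matrix.one_apply, w1, w2, w3]
  · rw [show (⟨3, by norm_num⟩ : Fin 6) = 3 from rfl, r3]
    fin_cases j <;> simp [Matrix.one_apply, w1, w2, w3]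
  · rw [show (⟨4, by norm_num⟩ : Fin 6) = 4 from rfl, r4]
    fin_cases j <;> simp [Matrix.one_apply, w1, w2, w3]
  · rw [show (⟨5, by norm_num⟩ : Fin 6) = 5 from rfl, r5]
    fin_cases j <;> simp [Matrix.one_apply, w1, w2, w3]

/-! ### The action framework -/

instance : Finite (Submodule F3 V6) :=
  Finite.of_injective (fun p => (p : Set V6)) SetLike.coe_injective

noncomputable instance : DecidableEq (Submodule F3 V6) := Classical.decEq _

abbrev S5T := {x : Submodule F3 V6 // x ∈ F5}

def Realizes (g : GL (Fin 6) F3) (σ : Equiv.Perm S5T) : Prop :=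
  ∀ ℓ : Submodule F3 V6, ∀ h : ℓ ∈ F5,
    ℓ.map (Matrix.vecMulLinear (g : Matrix (Fin 6) (Fin 6) F3))
      = ((σ ⟨ℓ, h⟩ : S5T) : Submodule F3 V6)

lemma vecMulLinear_mul (A B : Matrix (Fin 6) (Fin 6) F3) :
    (A * B).vecMulLinear = B.vecMulLinear.comp A.vecMulLinear := by
  apply LinearMap.ext
  intro v
  simp [Matrix.vecMul_vecMul]

lemma map_map_line (ℓ : Submodule F3 V6) (A B : Matrix (Fin 6) (Fin 6) F3) :
    ℓ.map (A * B).vecMulLinear = (ℓ.map A.vecMulLinear).map B.vecMulLinear := by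
  rw [vecMulLinear_mul, Submodule.map_comp]

lemma vecMulLinear_one_map (ℓ : Submodule F3 V6) :
    ℓ.map (Matrix.vecMulLinear (1 : Matrix (Fin 6) (Fin 6) F3)) = ℓ := by
  have : (Matrix.vecMulLinear (1 : Matrix (Fin 6) (Fin 6) F3)) = LinearMap.id := by
    apply LinearMap.ext; intro v; simp [Matrix.vecMul_one]
  rw [this, Submodule.map_id]

lemma neg_one_map (ℓ : Submodule F3 V6) (h : ℓ ∈ F5) :
    ℓ.map (Matrix.vecMulLinear (-1 : Matrix (Fin 6) (Fin 6) F3)) = ℓ := by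
  rcases mem_F5_iff.mp h with rfl | rfl | rfl | rfl | rfl <;>
    (rw [map_lineOf]; exact lineOf_eq_iff.mpr (by decide))

lemma realizes_one : Realizes 1 1 := by
  intro ℓ h
  simp [Units.val_one, vecMulLinear_one_map]

lemma realizes_mul {ga gb : GL (Fin 6) F3} {a b : Equiv.Perm S5T}
    (ha : Realizes ga a) (hb : Realizes gb b) : Realizes (gb * ga) (a * b) := by
  intro ℓ h
  rw [Units.val_mul, map_map_line, hb ℓ h]
  have := ha ((b ⟨ℓ, h⟩ : S5T) : Submodule F3 V6) (b ⟨ℓ, h⟩).2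
  rw [this, Subtype.coe_eta]
  rfl

lemma realizes_inv {g : GL (Fin 6) F3} {σ : Equiv.Perm S5T}
    (hg : Realizes g σ) : Realizes g⁻¹ σ⁻¹ := by
  intro ℓ h
  have h2 := hg ((σ⁻¹ ⟨ℓ, h⟩ : S5T) : Submodule F3 V6) (σ⁻¹ ⟨ℓ, h⟩).2
  have h3 : σ (σ⁻¹ ⟨ℓ, h⟩) = ⟨ℓ, h⟩ := Equiv.apply_symm_apply σ _
  have h4 : ((σ⁻¹ ⟨ℓ, h⟩ : S5T) : Submodule F3 V6).map
      (Matrix.vecMulLinear (g : Matrix (Fin 6) (Fin 6) F3)) = ℓ := by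
    rw [h2, Subtype.coe_eta, h3]
  calc ℓ.map (Matrix.vecMulLinear ((g⁻¹ : GL (Fin 6) F3) : Matrix (Fin 6) (Fin 6) F3))
      = (((σ⁻¹ ⟨ℓ, h⟩ : S5T) : Submodule F3 V6).map
          (Matrix.vecMulLinear (g : Matrix (Fin 6) (Fin 6) F3))).map
          (Matrix.vecMulLinear ((g⁻¹ : GL (Fin 6) F3) : Matrix (Fin 6) (Fin 6) F3)) := by
        rw [h4]
    _ = ((σ⁻¹ ⟨ℓ, h⟩ : S5T) : Submodule F3 V6).map
          (Matrix.vecMulLinear ((g : Matrix (Fin 6) (Fin 6) F3) *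
            ((g⁻¹ : GL (Fin 6) F3) : Matrix (Fin 6) (Fin 6) F3))) := (map_map_line _ _ _).symm
    _ = ((σ⁻¹ ⟨ℓ, h⟩ : S5T) : Submodule F3 V6) := by
        rw [show ((g : Matrix (Fin 6) (Fin 6) F3) *
          ((g⁻¹ : GL (Fin 6) F3) : Matrix (Fin 6) (Fin 6) F3)) = 1 from by
            rw [← Units.val_mul, mul_inv_cancel, Units.val_one], vecMulLinear_one_map]

def Hgrp : Subgroup (Equiv.Perm S5T) where
  carrier := {σ | ∃ g, Realizes g σ}
  one_mem' := ⟨1, realizes_one⟩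
  mul_mem' := by
    rintro a b ⟨ga, ha⟩ ⟨gb, hb⟩
    exact ⟨gb * ga, realizes_mul ha hb⟩
  inv_mem' := by
    rintro a ⟨ga, ha⟩
    exact ⟨ga⁻¹, realizes_inv ha⟩

def x0 : S5T := ⟨lineOf m0, by rw [mem_F5_iff]; tauto⟩

def x1 : S5T := ⟨lineOf m1, by rw [mem_F5_iff]; tauto⟩

def x2 : S5T := ⟨lineOf m2, by rw [mem_F5_iff]; tauto⟩

def x3 : S5T := ⟨lineOf m3, by rw [mem_F5_iff]; tauto⟩

def x4 : S5T := ⟨lineOf m4, by rw [mem_F5_iff]; tauto⟩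

def G01 : GL (Fin 6) F3 :=
  ⟨!![0,0,1,0,0,0; 0,0,1,2,0,0; 1,0,0,0,0,0; 1,2,0,0,0,0; 0,0,0,0,1,0; 0,0,0,0,1,2], !![0,0,1,0,0,0; 0,0,1,2,0,0; 1,0,0,0,0,0; 1,2,0,0,0,0; 0,0,0,0,1,0; 0,0,0,0,1,2], by decide, by decide⟩

lemma real01 : Realizes G01 (Equiv.swap x0 x1) := by
  intro ℓ h
  rcases mem_F5_iff.mp h with rfl | rfl | rfl | rfl | rfl
  · rw [show (⟨lineOf m0, h⟩ : S5T) = x0 from Subtype.ext rfl, Equiv.swap_apply_left,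
      map_lineOf]
    exact lineOf_eq_iff.mpr (by decide)
  · rw [show (⟨lineOf m1, h⟩ : S5T) = x1 from Subtype.ext rfl, Equiv.swap_apply_right,
      map_lineOf]
    exact lineOf_eq_iff.mpr (by decide)
  · rw [Equiv.swap_apply_of_ne_of_ne
      (fun e => lineOf_ne (A := m2) (B := m0) (by decide) (congrArg Subtype.val e))
      (fun e => lineOf_ne (A := m2) (B := m1) (by decide) (congrArg Subtype.val e)),
      map_lineOf]
    exact lineOf_eq_iff.mpr (by decide)
  · rw [Equiv.swap_apply_of_ne_of_ne
      (fun e => lineOf_ne (A := m3) (B := m0) (by decide) (congrArg Subtype.val e))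
      (fun e => lineOf_ne (A := m3) (B := m1) (by decide) (congrArg Subtype.val e)),
      map_lineOf]
    exact lineOf_eq_iff.mpr (by decide)
  · rw [Equiv.swap_apply_of_ne_of_ne
      (fun e => lineOf_ne (A := m4) (B := m0) (by decide) (congrArg Subtype.val e))
      (fun e => lineOf_ne (A := m4) (B := m1) (by decide) (congrArg Subtype.val e)),
      map_lineOf]
    exact lineOf_eq_iff.mpr (by decide)

def G02 : GL (Fin 6) F3 :=
  ⟨!![0,0,0,0,1,2; 0,0,0,0,0,2; 0,0,1,2,0,0; 0,0,0,2,0,0; 1,2,0,0,0,0; 0,2,0,0,0,0], !![0,0,0,0,1,2; 0,0,0,0,0,2; 0,0,1,2,0,0; 0,0,0,2,0,0; 1,2,0,0,0,0; 0,2,0,0,0,0], by decide, by decide⟩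

lemma real02 : Realizes G02 (Equiv.swap x0 x2) := by
  intro ℓ h
  rcases mem_F5_iff.mp h with rfl | rfl | rfl | rfl | rfl
  · rw [show (⟨lineOf m0, h⟩ : S5T) = x0 from Subtype.ext rfl, Equiv.swap_apply_left,
      map_lineOf]
    exact lineOf_eq_iff.mpr (by decide)
  · rw [Equiv.swap_apply_of_ne_of_ne
      (fun e => lineOf_ne (A := m1) (B := m0) (by decide) (congrArg Subtype.val e))
      (fun e => lineOf_ne (A := m1) (B := m2) (by decide) (congrArg Subtype.val e)),
      map_lineOf]
    exact lineOf_eq_iff.mpr (by decide)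
  · rw [show (⟨lineOf m2, h⟩ : S5T) = x2 from Subtype.ext rfl, Equiv.swap_apply_right,
      map_lineOf]
    exact lineOf_eq_iff.mpr (by decide)
  · rw [Equiv.swap_apply_of_ne_of_ne
      (fun e => lineOf_ne (A := m3) (B := m0) (by decide) (congrArg Subtype.val e))
      (fun e => lineOf_ne (A := m3) (B := m2) (by decide) (congrArg Subtype.val e)),
      map_lineOf]
    exact lineOf_eq_iff.mpr (by decide)
  · rw [Equiv.swap_apply_of_ne_of_ne
      (fun e => lineOf_ne (A := m4) (B := m0) (by decide) (congrArg Subtype.val e))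
      (fun e => lineOf_ne (A := m4) (B := m2) (by decide) (congrArg Subtype.val e)),
      map_lineOf]
    exact lineOf_eq_iff.mpr (by decide)

def G03 : GL (Fin 6) F3 :=
  ⟨!![1,0,1,0,1,0; 0,2,0,2,0,2; 0,0,2,0,0,0; 0,0,0,1,0,0; 0,0,0,0,2,0; 0,0,0,0,0,1], !![1,0,1,0,1,0; 0,2,0,2,0,2; 0,0,2,0,0,0; 0,0,0,1,0,0; 0,0,0,0,2,0; 0,0,0,0,0,1], by decide, by decide⟩

lemma real03 : Realizes G03 (Equiv.swap x0 x3) := by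
  intro ℓ h
  rcases mem_F5_iff.mp h with rfl | rfl | rfl | rfl | rfl
  · rw [show (⟨lineOf m0, h⟩ : S5T) = x0 from Subtype.ext rfl, Equiv.swap_apply_left,
      map_lineOf]
    exact lineOf_eq_iff.mpr (by decide)
  · rw [Equiv.swap_apply_of_ne_of_ne
      (fun e => lineOf_ne (A := m1) (B := m0) (by decide) (congrArg Subtype.val e))
      (fun e => lineOf_ne (A := m1) (B := m3) (by decide) (congrArg Subtype.val e)),
      map_lineOf]
    exact lineOf_eq_iff.mpr (by decide)
  · rw [Equiv.swap_apply_of_ne_of_ne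
      (fun e => lineOf_ne (A := m2) (B := m0) (by decide) (congrArg Subtype.val e))
      (fun e => lineOf_ne (A := m2) (B := m3) (by decide) (congrArg Subtype.val e)),
      map_lineOf]
    exact lineOf_eq_iff.mpr (by decide)
  · rw [show (⟨lineOf m3, h⟩ : S5T) = x3 from Subtype.ext rfl, Equiv.swap_apply_right,
      map_lineOf]
    exact lineOf_eq_iff.mpr (by decide)
  · rw [Equiv.swap_apply_of_ne_of_ne
      (fun e => lineOf_ne (A := m4) (B := m0) (by decide) (congrArg Subtype.val e))
      (fun e => lineOf_ne (A := m4) (B := m3) (by decide) (congrArg Subtype.val e)),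
      map_lineOf]
    exact lineOf_eq_iff.mpr (by decide)

def G04 : GL (Fin 6) F3 :=
  ⟨!![1,0,2,0,2,2; 0,2,1,1,0,1; 0,0,2,0,0,0; 0,0,2,1,0,0; 0,0,0,0,2,1; 0,0,0,0,0,1], !![1,0,2,0,2,2; 0,2,1,1,0,1; 0,0,2,0,0,0; 0,0,2,1,0,0; 0,0,0,0,2,1; 0,0,0,0,0,1], by decide, by decide⟩

lemma real04 : Realizes G04 (Equiv.swap x0 x4) := by
  intro ℓ h
  rcases mem_F5_iff.mp h with rfl | rfl | rfl | rfl | rfl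
  · rw [show (⟨lineOf m0, h⟩ : S5T) = x0 from Subtype.ext rfl, Equiv.swap_apply_left,
      map_lineOf]
    exact lineOf_eq_iff.mpr (by decide)
  · rw [Equiv.swap_apply_of_ne_of_ne
      (fun e => lineOf_ne (A := m1) (B := m0) (by decide) (congrArg Subtype.val e))
      (fun e => lineOf_ne (A := m1) (B := m4) (by decide) (congrArg Subtype.val e)),
      map_lineOf]
    exact lineOf_eq_iff.mpr (by decide)
  · rw [Equiv.swap_apply_of_ne_of_ne
      (fun e => lineOf_ne (A := m2) (B := m0) (by decide) (congrArg Subtype.val e))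
      (fun e => lineOf_ne (A := m2) (B := m4) (by decide) (congrArg Subtype.val e)),
      map_lineOf]
    exact lineOf_eq_iff.mpr (by decide)
  · rw [Equiv.swap_apply_of_ne_of_ne
      (fun e => lineOf_ne (A := m3) (B := m0) (by decide) (congrArg Subtype.val e))
      (fun e => lineOf_ne (A := m3) (B := m4) (by decide) (congrArg Subtype.val e)),
      map_lineOf]
    exact lineOf_eq_iff.mpr (by decide)
  · rw [show (⟨lineOf m4, h⟩ : S5T) = x4 from Subtype.ext rfl, Equiv.swap_apply_right,
      map_lineOf]
    exact lineOf_eq_iff.mpr (by decide)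

def G12 : GL (Fin 6) F3 :=
  ⟨!![0,1,0,0,0,0; 1,0,0,0,0,0; 0,0,0,0,0,1; 0,0,0,0,1,0; 0,0,0,1,0,0; 0,0,1,0,0,0], !![0,1,0,0,0,0; 1,0,0,0,0,0; 0,0,0,0,0,1; 0,0,0,0,1,0; 0,0,0,1,0,0; 0,0,1,0,0,0], by decide, by decide⟩

lemma real12 : Realizes G12 (Equiv.swap x1 x2) := by
  intro ℓ h
  rcases mem_F5_iff.mp h with rfl | rfl | rfl | rfl | rfl
  · rw [Equiv.swap_apply_of_ne_of_ne
      (fun e => lineOf_ne (A := m0) (B := m1) (by decide) (congrArg Subtype.val e))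
      (fun e => lineOf_ne (A := m0) (B := m2) (by decide) (congrArg Subtype.val e)),
      map_lineOf]
    exact lineOf_eq_iff.mpr (by decide)
  · rw [show (⟨lineOf m1, h⟩ : S5T) = x1 from Subtype.ext rfl, Equiv.swap_apply_left,
      map_lineOf]
    exact lineOf_eq_iff.mpr (by decide)
  · rw [show (⟨lineOf m2, h⟩ : S5T) = x2 from Subtype.ext rfl, Equiv.swap_apply_right,
      map_lineOf]
    exact lineOf_eq_iff.mpr (by decide)
  · rw [Equiv.swap_apply_of_ne_of_ne
      (fun e => lineOf_ne (A := m3) (B := m1) (by decide) (congrArg Subtype.val e))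
      (fun e => lineOf_ne (A := m3) (B := m2) (by decide) (congrArg Subtype.val e)),
      map_lineOf]
    exact lineOf_eq_iff.mpr (by decide)
  · rw [Equiv.swap_apply_of_ne_of_ne
      (fun e => lineOf_ne (A := m4) (B := m1) (by decide) (congrArg Subtype.val e))
      (fun e => lineOf_ne (A := m4) (B := m2) (by decide) (congrArg Subtype.val e)),
      map_lineOf]
    exact lineOf_eq_iff.mpr (by decide)

def G13 : GL (Fin 6) F3 :=
  ⟨!![1,0,0,0,0,0; 2,2,0,0,0,0; 2,0,2,0,2,0; 1,1,1,1,1,1; 0,0,0,0,1,0; 0,0,0,0,2,2], !![1,0,0,0,0,0; 2,2,0,0,0,0; 2,0,2,0,2,0; 1,1,1,1,1,1; 0,0,0,0,1,0; 0,0,0,0,2,2], by decide, by decide⟩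

lemma real13 : Realizes G13 (Equiv.swap x1 x3) := by
  intro ℓ h
  rcases mem_F5_iff.mp h with rfl | rfl | rfl | rfl | rfl
  · rw [Equiv.swap_apply_of_ne_of_ne
      (fun e => lineOf_ne (A := m0) (B := m1) (by decide) (congrArg Subtype.val e))
      (fun e => lineOf_ne (A := m0) (B := m3) (by decide) (congrArg Subtype.val e)),
      map_lineOf]
    exact lineOf_eq_iff.mpr (by decide)
  · rw [show (⟨lineOf m1, h⟩ : S5T) = x1 from Subtype.ext rfl, Equiv.swap_apply_left,
      map_lineOf]
    exact lineOf_eq_iff.mpr (by decide)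
  · rw [Equiv.swap_apply_of_ne_of_ne
      (fun e => lineOf_ne (A := m2) (B := m1) (by decide) (congrArg Subtype.val e))
      (fun e => lineOf_ne (A := m2) (B := m3) (by decide) (congrArg Subtype.val e)),
      map_lineOf]
    exact lineOf_eq_iff.mpr (by decide)
  · rw [show (⟨lineOf m3, h⟩ : S5T) = x3 from Subtype.ext rfl, Equiv.swap_apply_right,
      map_lineOf]
    exact lineOf_eq_iff.mpr (by decide)
  · rw [Equiv.swap_apply_of_ne_of_ne
      (fun e => lineOf_ne (A := m4) (B := m1) (by decide) (congrArg Subtype.val e))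
      (fun e => lineOf_ne (A := m4) (B := m3) (by decide) (congrArg Subtype.val e)),
      map_lineOf]
    exact lineOf_eq_iff.mpr (by decide)

def G14 : GL (Fin 6) F3 :=
  ⟨!![1,0,0,0,0,0; 1,2,0,0,0,0; 1,0,2,0,2,2; 0,2,1,1,0,1; 0,0,0,0,0,1; 0,0,0,0,1,0], !![1,0,0,0,0,0; 1,2,0,0,0,0; 1,0,2,0,2,2; 0,2,1,1,0,1; 0,0,0,0,0,1; 0,0,0,0,1,0], by decide, by decide⟩

lemma real14 : Realizes G14 (Equiv.swap x1 x4) := by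
  intro ℓ h
  rcases mem_F5_iff.mp h with rfl | rfl | rfl | rfl | rfl
  · rw [Equiv.swap_apply_of_ne_of_ne
      (fun e => lineOf_ne (A := m0) (B := m1) (by decide) (congrArg Subtype.val e))
      (fun e => lineOf_ne (A := m0) (B := m4) (by decide) (congrArg Subtype.val e)),
      map_lineOf]
    exact lineOf_eq_iff.mpr (by decide)
  · rw [show (⟨lineOf m1, h⟩ : S5T) = x1 from Subtype.ext rfl, Equiv.swap_apply_left,
      map_lineOf]
    exact lineOf_eq_iff.mpr (by decide)
  · rw [Equiv.swap_apply_of_ne_of_ne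
      (fun e => lineOf_ne (A := m2) (B := m1) (by decide) (congrArg Subtype.val e))
      (fun e => lineOf_ne (A := m2) (B := m4) (by decide) (congrArg Subtype.val e)),
      map_lineOf]
    exact lineOf_eq_iff.mpr (by decide)
  · rw [Equiv.swap_apply_of_ne_of_ne
      (fun e => lineOf_ne (A := m3) (B := m1) (by decide) (congrArg Subtype.val e))
      (fun e => lineOf_ne (A := m3) (B := m4) (by decide) (congrArg Subtype.val e)),
      map_lineOf]
    exact lineOf_eq_iff.mpr (by decide)
  · rw [show (⟨lineOf m4, h⟩ : S5T) = x4 from Subtype.ext rfl, Equiv.swap_apply_right,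
      map_lineOf]
    exact lineOf_eq_iff.mpr (by decide)

def G23 : GL (Fin 6) F3 :=
  ⟨!![1,1,0,0,0,0; 0,2,0,0,0,0; 0,0,1,1,0,0; 0,0,0,2,0,0; 2,2,2,2,2,2; 0,1,0,1,0,1], !![1,1,0,0,0,0; 0,2,0,0,0,0; 0,0,1,1,0,0; 0,0,0,2,0,0; 2,2,2,2,2,2; 0,1,0,1,0,1], by decide, by decide⟩

lemma real23 : Realizes G23 (Equiv.swap x2 x3) := by
  intro ℓ h
  rcases mem_F5_iff.mp h with rfl | rfl | rfl | rfl | rfl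
  · rw [Equiv.swap_apply_of_ne_of_ne
      (fun e => lineOf_ne (A := m0) (B := m2) (by decide) (congrArg Subtype.val e))
      (fun e => lineOf_ne (A := m0) (B := m3) (by decide) (congrArg Subtype.val e)),
      map_lineOf]
    exact lineOf_eq_iff.mpr (by decide)
  · rw [Equiv.swap_apply_of_ne_of_ne
      (fun e => lineOf_ne (A := m1) (B := m2) (by decide) (congrArg Subtype.val e))
      (fun e => lineOf_ne (A := m1) (B := m3) (by decide) (congrArg Subtype.val e)),
      map_lineOf]
    exact lineOf_eq_iff.mpr (by decide)
  · rw [show (⟨lineOf m2, h⟩ : S5T) = x2 from Subtype.ext rfl, Equiv.swap_apply_left,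
      map_lineOf]
    exact lineOf_eq_iff.mpr (by decide)
  · rw [show (⟨lineOf m3, h⟩ : S5T) = x3 from Subtype.ext rfl, Equiv.swap_apply_right,
      map_lineOf]
    exact lineOf_eq_iff.mpr (by decide)
  · rw [Equiv.swap_apply_of_ne_of_ne
      (fun e => lineOf_ne (A := m4) (B := m2) (by decide) (congrArg Subtype.val e))
      (fun e => lineOf_ne (A := m4) (B := m3) (by decide) (congrArg Subtype.val e)),
      map_lineOf]
    exact lineOf_eq_iff.mpr (by decide)

def G24 : GL (Fin 6) F3 :=
  ⟨!![1,2,0,0,0,0; 0,2,0,0,0,0; 0,0,0,2,0,0; 0,0,2,0,0,0; 1,0,2,0,2,2; 0,2,1,1,0,1], !![1,2,0,0,0,0; 0,2,0,0,0,0; 0,0,0,2,0,0; 0,0,2,0,0,0; 1,0,2,0,2,2; 0,2,1,1,0,1], by decide, by decide⟩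

lemma real24 : Realizes G24 (Equiv.swap x2 x4) := by
  intro ℓ h
  rcases mem_F5_iff.mp h with rfl | rfl | rfl | rfl | rfl
  · rw [Equiv.swap_apply_of_ne_of_ne
      (fun e => lineOf_ne (A := m0) (B := m2) (by decide) (congrArg Subtype.val e))
      (fun e => lineOf_ne (A := m0) (B := m4) (by decide) (congrArg Subtype.val e)),
      map_lineOf]
    exact lineOf_eq_iff.mpr (by decide)
  · rw [Equiv.swap_apply_of_ne_of_ne
      (fun e => lineOf_ne (A := m1) (B := m2) (by decide) (congrArg Subtype.val e))
      (fun e => lineOf_ne (A := m1) (B := m4) (by decide) (congrArg Subtype.val e)),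
      map_lineOf]
    exact lineOf_eq_iff.mpr (by decide)
  · rw [show (⟨lineOf m2, h⟩ : S5T) = x2 from Subtype.ext rfl, Equiv.swap_apply_left,
      map_lineOf]
    exact lineOf_eq_iff.mpr (by decide)
  · rw [Equiv.swap_apply_of_ne_of_ne
      (fun e => lineOf_ne (A := m3) (B := m2) (by decide) (congrArg Subtype.val e))
      (fun e => lineOf_ne (A := m3) (B := m4) (by decide) (congrArg Subtype.val e)),
      map_lineOf]
    exact lineOf_eq_iff.mpr (by decide)
  · rw [show (⟨lineOf m4, h⟩ : S5T) = x4 from Subtype.ext rfl, Equiv.swap_apply_right,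
      map_lineOf]
    exact lineOf_eq_iff.mpr (by decide)

def G34 : GL (Fin 6) F3 :=
  ⟨!![1,0,0,0,0,0; 0,2,0,0,0,0; 0,0,2,0,0,0; 0,0,1,1,0,0; 0,0,0,0,2,2; 0,0,0,0,0,1], !![1,0,0,0,0,0; 0,2,0,0,0,0; 0,0,2,0,0,0; 0,0,1,1,0,0; 0,0,0,0,2,2; 0,0,0,0,0,1], by decide, by decide⟩

lemma real34 : Realizes G34 (Equiv.swap x3 x4) := by
  intro ℓ h
  rcases mem_F5_iff.mp h with rfl | rfl | rfl | rfl | rfl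
  · rw [Equiv.swap_apply_of_ne_of_ne
      (fun e => lineOf_ne (A := m0) (B := m3) (by decide) (congrArg Subtype.val e))
      (fun e => lineOf_ne (A := m0) (B := m4) (by decide) (congrArg Subtype.val e)),
      map_lineOf]
    exact lineOf_eq_iff.mpr (by decide)
  · rw [Equiv.swap_apply_of_ne_of_ne
      (fun e => lineOf_ne (A := m1) (B := m3) (by decide) (congrArg Subtype.val e))
      (fun e => lineOf_ne (A := m1) (B := m4) (by decide) (congrArg Subtype.val e)),
      map_lineOf]
    exact lineOf_eq_iff.mpr (by decide)
  · rw [Equiv.swap_apply_of_ne_of_ne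
      (fun e => lineOf_ne (A := m2) (B := m3) (by decide) (congrArg Subtype.val e))
      (fun e => lineOf_ne (A := m2) (B := m4) (by decide) (congrArg Subtype.val e)),
      map_lineOf]
    exact lineOf_eq_iff.mpr (by decide)
  · rw [show (⟨lineOf m3, h⟩ : S5T) = x3 from Subtype.ext rfl, Equiv.swap_apply_left,
      map_lineOf]
    exact lineOf_eq_iff.mpr (by decide)
  · rw [show (⟨lineOf m4, h⟩ : S5T) = x4 from Subtype.ext rfl, Equiv.swap_apply_right,
      map_lineOf]
    exact lineOf_eq_iff.mpr (by decide)

lemma swaps_realized : ∀ σ : Equiv.Perm S5T, σ.IsSwap → ∃ g, Realizes g σ := by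
  rintro σ ⟨x, y, hxy, rfl⟩
  rcases mem_F5_iff.mp x.2 with h1 | h1 | h1 | h1 | h1 <;>
    rcases mem_F5_iff.mp y.2 with h2 | h2 | h2 | h2 | h2
  · exact absurd (Subtype.ext (h1.trans h2.symm)) hxy
  · exact ⟨G01, by rw [show x = x0 from Subtype.ext h1, show y = x1 from Subtype.ext h2]; exact real01⟩
  · exact ⟨G02, by rw [show x = x0 from Subtype.ext h1, show y = x2 from Subtype.ext h2]; exact real02⟩
  · exact ⟨G03, by rw [show x = x0 from Subtype.ext h1, show y = x3 from Subtype.ext h2]; exact real03⟩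
  · exact ⟨G04, by rw [show x = x0 from Subtype.ext h1, show y = x4 from Subtype.ext h2]; exact real04⟩
  · exact ⟨G01, by rw [show x = x1 from Subtype.ext h1, show y = x0 from Subtype.ext h2, Equiv.swap_comm]; exact real01⟩
  · exact absurd (Subtype.ext (h1.trans h2.symm)) hxy
  · exact ⟨G12, by rw [show x = x1 from Subtype.ext h1, show y = x2 from Subtype.ext h2]; exact real12⟩
  · exact ⟨G13, by rw [show x = x1 from Subtype.ext h1, show y = x3 from Subtype.ext h2]; exact real13⟩
  · exact ⟨G14, by rw [show x = x1 from Subtype.ext h1, show y = x4 from Subtype.ext h2]; exact real14⟩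
  · exact ⟨G02, by rw [show x = x2 from Subtype.ext h1, show y = x0 from Subtype.ext h2, Equiv.swap_comm]; exact real02⟩
  · exact ⟨G12, by rw [show x = x2 from Subtype.ext h1, show y = x1 from Subtype.ext h2, Equiv.swap_comm]; exact real12⟩
  · exact absurd (Subtype.ext (h1.trans h2.symm)) hxy
  · exact ⟨G23, by rw [show x = x2 from Subtype.ext h1, show y = x3 from Subtype.ext h2]; exact real23⟩
  · exact ⟨G24, by rw [show x = x2 from Subtype.ext h1, show y = x4 from Subtype.ext h2]; exact real24⟩
  · exact ⟨G03, by rw [show x = x3 from Subtype.ext h1, show y = x0 from Subtype.ext h2, Equiv.swap_comm]; exact real03⟩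
  · exact ⟨G13, by rw [show x = x3 from Subtype.ext h1, show y = x1 from Subtype.ext h2, Equiv.swap_comm]; exact real13⟩
  · exact ⟨G23, by rw [show x = x3 from Subtype.ext h1, show y = x2 from Subtype.ext h2, Equiv.swap_comm]; exact real23⟩
  · exact absurd (Subtype.ext (h1.trans h2.symm)) hxy
  · exact ⟨G34, by rw [show x = x3 from Subtype.ext h1, show y = x4 from Subtype.ext h2]; exact real34⟩
  · exact ⟨G04, by rw [show x = x4 from Subtype.ext h1, show y = x0 from Subtype.ext h2, Equiv.swap_comm]; exact real04⟩
  · exact ⟨G14, by rw [show x = x4 from Subtype.ext h1, show y = x1 from Subtype.ext h2, Equiv.swap_comm]; exact real14⟩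
  · exact ⟨G24, by rw [show x = x4 from Subtype.ext h1, show y = x2 from Subtype.ext h2, Equiv.swap_comm]; exact real24⟩
  · exact ⟨G34, by rw [show x = x4 from Subtype.ext h1, show y = x3 from Subtype.ext h2, Equiv.swap_comm]; exact real34⟩
  · exact absurd (Subtype.ext (h1.trans h2.symm)) hxy

lemma all_realized (σ : Equiv.Perm S5T) : ∃ g, Realizes g σ := by
  letI : DecidableEq (Submodule F3 V6) := Classical.decEq _
  have htop : Hgrp = ⊤ := by
    rw [eq_top_iff, ← Equiv.Perm.closure_isSwap]
    rw [Subgroup.closure_le]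
    exact fun τ hτ => swaps_realized τ hτ
  have : σ ∈ Hgrp := htop ▸ Subgroup.mem_top σ
  exact this

/-! ### Kernel as a statement about GL elements -/

lemma kernel_iff (g : GL (Fin 6) F3) :
    (∀ ℓ ∈ F5, ℓ.map (Matrix.vecMulLinear (g : Matrix (Fin 6) (Fin 6) F3)) = ℓ) ↔
      ((g : Matrix (Fin 6) (Fin 6) F3) = 1 ∨ (g : Matrix (Fin 6) (Fin 6) F3) = -1) := by
  constructor
  · intro hfix
    have key : ∀ m : Matrix (Fin 2) (Fin 6) F3, lineOf m ∈ F5 →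
        lineLE (m * (g : Matrix (Fin 6) (Fin 6) F3)) m := by
      intro m hm
      have := hfix (lineOf m) hm
      rw [map_lineOf] at this
      exact (lineOf_eq_iff.mp this).1
    have hm0 : lineOf m0 ∈ F5 := by rw [mem_F5_iff]; tauto
    have hm1 : lineOf m1 ∈ F5 := by rw [mem_F5_iff]; tauto
    have hm2 : lineOf m2 ∈ F5 := by rw [mem_F5_iff]; tauto
    have hm3 : lineOf m3 ∈ F5 := by rw [mem_F5_iff]; tauto
    have hm4 : lineOf m4 ∈ F5 := by rw [mem_F5_iff]; tauto
    obtain ⟨a, ha⟩ := fix_shape _ (key m0 hm0) (key m1 hm1) (key m2 hm2) (key m3 hm3) (key m4 hm4)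
    have ha0 : a ≠ 0 := by
      rintro rfl
      rw [zero_smul] at ha
      have h1 := g.val_inv
      rw [ha, zero_mul] at h1
      exact one_ne_zero h1.symm
    have hcases : ∀ b : F3, b ≠ 0 → b = 1 ∨ b = 2 := by decide
    rcases hcases a ha0 with rfl | rfl
    · left; rw [ha, one_smul]
    · right
      rw [ha, show ((2 : F3)) = -1 from by decide, neg_smul, one_smul]
  · intro h12 ℓ hF
    rcases mem_F5_iff.mp hF with rfl | rfl | rfl | rfl | rfl <;>
      rcases h12 with h | h <;> rw [h, map_lineOf] <;> exact lineOf_eq_iff.mpr (by decide)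

/-! ### Counting -/

def idx6 (v : V6) : Fin 6 :=
  if v 0 ≠ 0 then 0 else if v 1 ≠ 0 then 1 else if v 2 ≠ 0 then 2
    else if v 3 ≠ 0 then 3 else if v 4 ≠ 0 then 4 else 5

def sgn6 (v : V6) : Bool := decide (v (idx6 v) = 1)

lemma idx6_neg (v : V6) : idx6 (-v) = idx6 v := by
  unfold idx6
  simp only [Pi.neg_apply, ne_eq, neg_eq_zero]

lemma idx6_nonzero (v : V6) (hv : v ≠ 0) : v (idx6 v) ≠ 0 := by
  unfold idx6
  split_ifs with h0 h1 h2 h3 h4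
  · exact h0
  · exact h1
  · exact h2
  · exact h3
  · exact h4
  · push_neg at h0 h1 h2 h3 h4
    intro h5
    apply hv
    funext i
    fin_cases i <;> assumption

lemma sgn6_neg (v : V6) (hv : v ≠ 0) : sgn6 (-v) = !(sgn6 v) := by
  unfold sgn6
  rw [idx6_neg]
  have hnz := idx6_nonzero v hv
  have hneg : (-v) (idx6 v) = -(v (idx6 v)) := rfl
  rw [hneg]
  revert hnz
  generalize v (idx6 v) = a
  revert a
  decide

lemma vecMul_injective (g : GL (Fin 6) F3) :
    Function.Injective (fun v : V6 => v ᵥ* (g : Matrix (Fin 6) (Fin 6) F3)) := by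
  intro u v huv
  have h1 : (g : Matrix (Fin 6) (Fin 6) F3) * ((g⁻¹ : GL (Fin 6) F3) : Matrix (Fin 6) (Fin 6) F3)
      = 1 := by rw [← Units.val_mul, mul_inv_cancel, Units.val_one]
  have h2 := congrArg (fun w => w ᵥ* ((g⁻¹ : GL (Fin 6) F3) : Matrix (Fin 6) (Fin 6) F3)) huv
  simp only at h2
  rw [Matrix.vecMul_vecMul, Matrix.vecMul_vecMul, h1, Matrix.vecMul_one, Matrix.vecMul_one] at h2
  exact h2

lemma row0_ne_zero (g : GL (Fin 6) F3) : (g : Matrix (Fin 6) (Fin 6) F3) 0 ≠ 0 := by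
  intro h0
  have h1 : (Pi.single (0 : Fin 6) (1 : F3)) ᵥ* (g : Matrix (Fin 6) (Fin 6) F3)
      = (g : Matrix (Fin 6) (Fin 6) F3) 0 := Matrix.single_one_vecMul _ _
  have h2 : ((0 : V6)) ᵥ* (g : Matrix (Fin 6) (Fin 6) F3) = 0 := Matrix.zero_vecMul _
  have h3 : (Pi.single (0 : Fin 6) (1 : F3)) = (0 : V6) :=
    vecMul_injective g (h1.trans (h0.trans h2.symm))
  have := congrFun h3 0
  simp at this

lemma line_distinct : F5.ncard = 5 := by
  rw [F5_eq]
  rw [Set.ncard_insert_of_notMem (by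
    simp only [Set.mem_insert_iff, Set.mem_singleton_iff]
    push_neg
    exact ⟨lineOf_ne (by decide), lineOf_ne (by decide), lineOf_ne (by decide),
      lineOf_ne (by decide)⟩)]
  rw [Set.ncard_insert_of_notMem (by
    simp only [Set.mem_insert_iff, Set.mem_singleton_iff]
    push_neg
    exact ⟨lineOf_ne (by decide), lineOf_ne (by decide), lineOf_ne (by decide)⟩)]
  rw [Set.ncard_insert_of_notMem (by
    simp only [Set.mem_insert_iff, Set.mem_singleton_iff]
    push_neg
    exact ⟨lineOf_ne (by decide), lineOf_ne (by decide)⟩)]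
  rw [Set.ncard_insert_of_notMem (by
    simp only [Set.mem_singleton_iff]
    exact lineOf_ne (by decide))]
  rw [Set.ncard_singleton]

end Aux

/-- The setwise stabilizer `G` of `F5` in `GL(6,3)` (acting on row
vectors) has order 240; the kernel of its permutation action on the five lines of `F5`
consists exactly of the scalar matrices `±1`; and every permutation of the five lines of
`F5` is induced by some element of `G`, i.e. the image of the action is the full symmetric
group on `F5` (so the projective stabilizer of `F5` is isomorphic to `S₅`). -/
theorem stmt10 :
    {g : GL (Fin 6) F3 |
      ∀ ℓ ∈ F5, ℓ.map (Matrix.vecMulLinear (g : Matrix (Fin 6) (Fin 6) F3)) ∈ F5}.ncard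
      = 240 ∧
    (∀ g : GL (Fin 6) F3,
      (∀ ℓ ∈ F5, ℓ.map (Matrix.vecMulLinear (g : Matrix (Fin 6) (Fin 6) F3)) = ℓ) ↔
      ((g : Matrix (Fin 6) (Fin 6) F3) = 1 ∨ (g : Matrix (Fin 6) (Fin 6) F3) = -1)) ∧
    (∀ σ : Equiv.Perm {x : Submodule F3 V6 // x ∈ F5},
      ∃ g : GL (Fin 6) F3, ∀ ℓ : Submodule F3 V6, ∀ h : ℓ ∈ F5,
        ℓ.map (Matrix.vecMulLinear (g : Matrix (Fin 6) (Fin 6) F3))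
          = ((σ ⟨ℓ, h⟩ : {x : Submodule F3 V6 // x ∈ F5}) : Submodule F3 V6)) := by
  letI : DecidableEq (Submodule F3 V6) := Classical.decEq _
  have kerIff := kernel_iff
  refine ⟨?_, kernel_iff, fun σ => by
    obtain ⟨g, hg⟩ := all_realized σ
    exact ⟨g, hg⟩⟩
  -- counting
  set Gset : Set (GL (Fin 6) F3) :=
    {g : GL (Fin 6) F3 |
      ∀ ℓ ∈ F5, ℓ.map (Matrix.vecMulLinear (g : Matrix (Fin 6) (Fin 6) F3)) ∈ F5} with hGset
  -- the permutation induced by an element of Gset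
  have mapinj : ∀ g : GL (Fin 6) F3,
      Function.Injective (Submodule.map (Matrix.vecMulLinear (g : Matrix (Fin 6) (Fin 6) F3))) :=
    fun g => Submodule.map_injective_of_injective (by
      intro u v huv
      exact vecMul_injective g (by simpa using huv))
  have pinj : ∀ x : ↥Gset, Function.Injective (fun p : S5T =>
      (⟨p.val.map (Matrix.vecMulLinear ((x : GL (Fin 6) F3) : Matrix (Fin 6) (Fin 6) F3)),
        x.2 p.val p.2⟩ : S5T)) := by
    intro x p q hpq
    exact Subtype.ext (mapinj x.val (congrArg Subtype.val hpq))
  have pbij : ∀ x : ↥Gset, Function.Bijective (fun p : S5T =>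
      (⟨p.val.map (Matrix.vecMulLinear ((x : GL (Fin 6) F3) : Matrix (Fin 6) (Fin 6) F3)),
        x.2 p.val p.2⟩ : S5T)) :=
    fun x => Finite.injective_iff_bijective.mp (pinj x)
  let Φ : ↥Gset → Equiv.Perm S5T × Bool := fun x =>
    (Equiv.ofBijective _ (pbij x), sgn6 (((x : GL (Fin 6) F3) : Matrix (Fin 6) (Fin 6) F3) 0))
  have realΦ : ∀ (x : ↥Gset), Realizes x.val (Φ x).1 := by
    intro x ℓ h
    rfl
  have fixed_of_real_eq : ∀ (u v : GL (Fin 6) F3) (τ : Equiv.Perm S5T),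
      Realizes u τ → Realizes v τ →
      ((u : Matrix (Fin 6) (Fin 6) F3) = (v : Matrix (Fin 6) (Fin 6) F3) ∨
       (u : Matrix (Fin 6) (Fin 6) F3) = -(v : Matrix (Fin 6) (Fin 6) F3)) := by
    intro u v τ hu hv
    have hz : ∀ ℓ ∈ F5, ℓ.map (Matrix.vecMulLinear
        (((u * v⁻¹ : GL (Fin 6) F3)) : Matrix (Fin 6) (Fin 6) F3)) = ℓ := by
      intro ℓ h
      have hvinv := realizes_inv hv
      rw [Units.val_mul, map_map_line, hu ℓ h]
      have := hvinv ((τ ⟨ℓ, h⟩ : S5T) : Submodule F3 V6) (τ ⟨ℓ, h⟩).2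
      rw [this]
      rw [show (⟨((τ ⟨ℓ, h⟩ : S5T) : Submodule F3 V6), (τ ⟨ℓ, h⟩).2⟩ : S5T) = τ ⟨ℓ, h⟩ from
        Subtype.ext rfl]
      rw [Equiv.Perm.inv_def, Equiv.symm_apply_apply]
    rcases (kerIff (u * v⁻¹)).mp hz with h | h
    · left
      have : (u * v⁻¹ : GL (Fin 6) F3) = 1 := Units.ext h
      have h2 : u = v := by
        have := congrArg (fun w => w * v) this
        simpa [mul_assoc] using this
      rw [h2]
    · right
      have h2 := congrArg (fun M => M * ((v : GL (Fin 6) F3) : Matrix (Fin 6) (Fin 6) F3)) h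
      rw [Units.val_mul, mul_assoc, ← Units.val_mul, inv_mul_cancel, Units.val_one, mul_one]
        at h2
      rw [h2, neg_one_mul]
  have negGL : ∀ g : GL (Fin 6) F3, ((-g : GL (Fin 6) F3) : Matrix (Fin 6) (Fin 6) F3)
      = -(g : Matrix (Fin 6) (Fin 6) F3) := fun g => rfl
  have negReal : ∀ (g : GL (Fin 6) F3) (τ : Equiv.Perm S5T), Realizes g τ → Realizes (-g) τ := by
    intro g τ hg ℓ h
    rw [negGL, show -(g : Matrix (Fin 6) (Fin 6) F3) = (g : Matrix (Fin 6) (Fin 6) F3) * (-1) from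
      by rw [Matrix.mul_neg, mul_one], map_map_line, hg ℓ h]
    exact neg_one_map _ (τ ⟨ℓ, h⟩).2
  have Φbij : Function.Bijective Φ := by
    constructor
    · intro x y hxy
      have h1 : (Φ x).1 = (Φ y).1 := by rw [hxy]
      have h2 : (Φ x).2 = (Φ y).2 := by rw [hxy]
      have hrx : Realizes x.val (Φ y).1 := h1 ▸ realΦ x
      have hry : Realizes y.val (Φ y).1 := realΦ y
      rcases fixed_of_real_eq _ _ _ hrx hry with h | h
      · exact Subtype.ext (Units.ext h)
      · exfalso
        have hrow : ((x : GL (Fin 6) F3) : Matrix (Fin 6) (Fin 6) F3) 0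
            = -(((y : GL (Fin 6) F3) : Matrix (Fin 6) (Fin 6) F3) 0) := by
          rw [h]; rfl
        have := sgn6_neg (((y : GL (Fin 6) F3) : Matrix (Fin 6) (Fin 6) F3) 0) (row0_ne_zero _)
        simp only [Φ] at h2
        rw [hrow, this] at h2
        exact absurd h2 (Bool.not_ne_self _)
    · rintro ⟨σ, b⟩
      obtain ⟨g, hg⟩ := all_realized σ
      have hgG : g ∈ Gset := by
        intro ℓ h
        rw [hg ℓ h]
        exact (σ ⟨ℓ, h⟩).2
      have hnegG : (-g) ∈ Gset := by
        intro ℓ h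
        rw [negReal g σ hg ℓ h]
        exact (σ ⟨ℓ, h⟩).2
      have permeq : ∀ (x : ↥Gset), Realizes x.val σ → (Φ x).1 = σ := by
        intro x hx
        apply Equiv.ext
        intro p
        apply Subtype.ext
        have h1 := realΦ x p.val p.2
        have h2 := hx p.val p.2
        rw [show (⟨p.val, p.2⟩ : S5T) = p from Subtype.ext rfl] at h1 h2
        rw [← h1, h2]
      by_cases hb : sgn6 ((g : Matrix (Fin 6) (Fin 6) F3) 0) = b
      · refine ⟨⟨g, hgG⟩, ?_⟩
        apply Prod.ext
        · exact permeq ⟨g, hgG⟩ hg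
        · exact hb
      · refine ⟨⟨-g, hnegG⟩, ?_⟩
        apply Prod.ext
        · exact permeq ⟨-g, hnegG⟩ (negReal g σ hg)
        · show sgn6 (((-g : GL (Fin 6) F3) : Matrix (Fin 6) (Fin 6) F3) 0) = b
          rw [negGL]
          have hval : (-(g : Matrix (Fin 6) (Fin 6) F3)) 0 = -((g : Matrix (Fin 6) (Fin 6) F3) 0) :=
            rfl
          rw [hval, sgn6_neg _ (row0_ne_zero g)]
          cases hsb : sgn6 ((g : Matrix (Fin 6) (Fin 6) F3) 0) <;> cases b <;> simp_all
  have hST5 : Nat.card S5T = 5 := by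
    rw [Nat.card_coe_set_eq, line_distinct]
  have hPerm : Nat.card (Equiv.Perm S5T) = 120 := by
    letI : Fintype S5T := Fintype.ofFinite _
    rw [Nat.card_eq_fintype_card, Fintype.card_perm,
      show Fintype.card S5T = 5 from by rw [← Nat.card_eq_fintype_card, hST5]]
    norm_num [Nat.factorial]
  calc Gset.ncard = Nat.card ↥Gset := (Nat.card_coe_set_eq _).symm
    _ = Nat.card (Equiv.Perm S5T × Bool) := Nat.card_congr (Equiv.ofBijective Φ Φbij)
    _ = 240 := by rw [Nat.card_prod, hPerm]; simp
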